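/- Let S ∈ SL(2,ℝ) and let P be the rank-one orthogonal projection onto a nonzero vector v ∈ ℝ². Then S⁻¹ J P S = c · J Q, where c > 0 is a positive real constant and Q is the rank-one orthogonal projection onto Sᵀ v. -/
import Mathlib


open Matrix

noncomputable def Jmat : Matrix (Fin 2) (Fin 2) ℝ := !![0, -1; 1, 0]

/-- The orthogonal projection onto the line spanned by a nonzero vector `v ∈ ℝ²`. -/
noncomputable def projOnto (v : Fin 2 → ℝ) : Matrix (Fin 2) (Fin 2) ℝ :=
  ((v 0) ^ 2 + (v 1) ^ 2)⁻¹ • vecMulVec v v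

theorem conj_JP (S : Matrix.SpecialLinearGroup (Fin 2) ℝ) (v : Fin 2 → ℝ) (hv : v ≠ 0) :
    ∃ c : ℝ, 0 < c ∧
      (↑(S⁻¹) : Matrix (Fin 2) (Fin 2) ℝ) * Jmat * projOnto v * (↑S : Matrix (Fin 2) (Fin 2) ℝ) =
        c • (Jmat * projOnto ((↑S : Matrix (Fin 2) (Fin 2) ℝ)ᵀ.mulVec v)) := by
  set a := (↑S : Matrix (Fin 2) (Fin 2) ℝ) 0 0 with ha
  set b := (↑S : Matrix (Fin 2) (Fin 2) ℝ) 0 1 with hb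
  set cc := (↑S : Matrix (Fin 2) (Fin 2) ℝ) 1 0 with hc
  set d := (↑S : Matrix (Fin 2) (Fin 2) ℝ) 1 1 with hd
  have hdet : a * d - b * cc = 1 := by
    have := S.2
    rw [Matrix.det_fin_two] at this
    exact this
  have hvpos : 0 < v 0 ^ 2 + v 1 ^ 2 := by
    rcases (show v 0 ≠ 0 ∨ v 1 ≠ 0 by
      by_contra h
      push_neg at h
      apply hv
      ext i
      fin_cases i <;> simp [h.1, h.2]) with h | h <;> positivity
  set w := (↑S : Matrix (Fin 2) (Fin 2) ℝ)ᵀ.mulVec v with hw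
  have hw0 : w 0 = a * v 0 + cc * v 1 := by
    simp [hw, mulVec, dotProduct, Fin.sum_univ_two, ha, hc]
  have hw1 : w 1 = b * v 0 + d * v 1 := by
    simp [hw, mulVec, dotProduct, Fin.sum_univ_two, hb, hd]
  have key0 : d * w 0 - cc * w 1 = v 0 := by
    rw [hw0, hw1]; linear_combination v 0 * hdet
  have key1 : -b * w 0 + a * w 1 = v 1 := by
    rw [hw0, hw1]; linear_combination v 1 * hdet
  have hwpos : 0 < w 0 ^ 2 + w 1 ^ 2 := by
    by_contra h
    push_neg at h
    have h0 : w 0 = 0 := by nlinarith [sq_nonneg (w 0), sq_nonneg (w 1)]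
    have h1 : w 1 = 0 := by nlinarith [sq_nonneg (w 0), sq_nonneg (w 1)]
    rw [h0, h1] at key0 key1
    nlinarith [hvpos, key0, key1]
  have hSinv : (↑(S⁻¹) : Matrix (Fin 2) (Fin 2) ℝ) = !![d, -b; -cc, a] := by
    rw [Matrix.SpecialLinearGroup.coe_inv, Matrix.adjugate_fin_two]
  have hstep1 : (↑(S⁻¹) : Matrix (Fin 2) (Fin 2) ℝ) * Jmat =
      Jmat * (↑S : Matrix (Fin 2) (Fin 2) ℝ)ᵀ := by
    ext i j
    fin_cases i <;> fin_cases j <;>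
      simp [hSinv, Jmat, mul_apply, Fin.sum_univ_two, transpose_apply, ← ha, ← hb, ← hc, ← hd]
  have hstep2 : (↑S : Matrix (Fin 2) (Fin 2) ℝ)ᵀ * (vecMulVec v v * (↑S : Matrix (Fin 2) (Fin 2) ℝ)) = vecMulVec w w := by
    ext i j
    fin_cases i <;> fin_cases j <;>
      simp [mul_apply, vecMulVec_apply, Fin.sum_univ_two, hw0, hw1, transpose_apply,
        ← ha, ← hb, ← hc, ← hd] <;> ring
  have hthis : (↑(S⁻¹) : Matrix (Fin 2) (Fin 2) ℝ) * Jmat * vecMulVec v v * (↑S : Matrix (Fin 2) (Fin 2) ℝ) =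
      Jmat * vecMulVec w w := by
    rw [hstep1]
    simp only [mul_assoc]
    rw [hstep2]
  refine ⟨(w 0 ^ 2 + w 1 ^ 2) / (v 0 ^ 2 + v 1 ^ 2), by positivity, ?_⟩
  rw [projOnto, projOnto, Matrix.mul_smul, Matrix.smul_mul, Matrix.mul_smul, smul_smul, hthis]
  congr 1
  field_simp
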